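/- Let s = diag(r, rq) ∈ GL(2,ℚ) with r > 0 and q ≥ 2 an integer, and let BS ≤ GL(2,ℚ) be the subgroup generated by s and u = [[1,1],[0,1]]. Then BS ∩ SL(2,ℤ) is the infinite cyclic group generated by u. -/

import Mathlib

open Matrix

/-- `SL(2,ℤ)` viewed as a subgroup of `GL(2,ℚ)`. -/
noncomputable def SL2Z : Subgroup (GL (Fin 2) ℚ) :=
  (Matrix.SpecialLinearGroup.toGL.comp
    (Matrix.SpecialLinearGroup.map (Int.castRingHom ℚ))).range

lemma upow_val (u : GL (Fin 2) ℚ) (hu : (u : Matrix (Fin 2) (Fin 2) ℚ) = !![1, 1; 0, 1]) :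
    ∀ m : ℤ, ((u ^ m : GL (Fin 2) ℚ) : Matrix (Fin 2) (Fin 2) ℚ) = !![1, (m : ℚ); 0, 1] := by
  have hinv : ((u⁻¹ : GL (Fin 2) ℚ) : Matrix (Fin 2) (Fin 2) ℚ) = !![1, -1; 0, 1] := by
    rw [Matrix.coe_units_inv, hu]
    rw [Matrix.inv_eq_left_inv]
    rw [Matrix.mul_fin_two, Matrix.one_fin_two]
    norm_num
  intro m
  induction m using Int.induction_on with
  | zero => simp [Matrix.one_fin_two]
  | succ k ih =>
      have : (u ^ ((k : ℤ) + 1) : GL (Fin 2) ℚ) = u ^ (k : ℤ) * u := by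
        rw [_root_.zpow_add_one]
      rw [this, Units.val_mul, ih, hu, Matrix.mul_fin_two]
      norm_num [add_comm]
  | pred k ih =>
      have : (u ^ (-(k : ℤ) - 1) : GL (Fin 2) ℚ) = u ^ (-(k : ℤ)) * u⁻¹ := by
        rw [_root_.zpow_sub_one]
      rw [this, Units.val_mul, ih, hinv, Matrix.mul_fin_two]
      push_cast
      norm_num
      ring_nf

theorem stmt1 (r : ℚ) (hr : 0 < r) (q : ℕ) (hq : 2 ≤ q)
    (u s : GL (Fin 2) ℚ)
    (hu : (u : Matrix (Fin 2) (Fin 2) ℚ) = !![1, 1; 0, 1])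
    (hs : (s : Matrix (Fin 2) (Fin 2) ℚ) = !![r, 0; 0, r * q]) :
    Subgroup.closure {s, u} ⊓ SL2Z = Subgroup.zpowers u ∧ ¬ IsOfFinOrder u := by
  have hr0 : r ≠ 0 := hr.ne'
  have hq1 : (1 : ℚ) < (q : ℚ) := by exact_mod_cast lt_of_lt_of_le one_lt_two (by exact_mod_cast hq)
  have hq0 : (q : ℚ) ≠ 0 := by positivity
  -- the subgroup H of upper triangular matrices of the right shape
  set H : Subgroup (GL (Fin 2) ℚ) :=
    { carrier := {g | ∃ n : ℤ, ∃ t : ℚ,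
        (g : Matrix (Fin 2) (Fin 2) ℚ) = !![r ^ n, t; 0, r ^ n * (q : ℚ) ^ n]}
      one_mem' := ⟨0, 0, by simp [Matrix.one_fin_two]⟩
      mul_mem' := by
        rintro a b ⟨n, t, ha⟩ ⟨m, w, hb⟩
        refine ⟨n + m, r ^ n * w + t * (r ^ m * (q:ℚ) ^ m), ?_⟩
        rw [Units.val_mul, ha, hb, Matrix.mul_fin_two]
        rw [zpow_add₀ hr0, zpow_add₀ hq0]
        congr 1 <;> ring
      inv_mem' := by
        rintro a ⟨n, t, ha⟩
        refine ⟨-n, -t * (r ^ n * (r ^ n * (q:ℚ) ^ n))⁻¹, ?_⟩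
        rw [Matrix.coe_units_inv, ha, Matrix.inv_eq_left_inv]
        rw [Matrix.mul_fin_two, Matrix.one_fin_two]
        have h1 : r ^ n ≠ 0 := zpow_ne_zero _ hr0
        have h2 : (q:ℚ) ^ n ≠ 0 := zpow_ne_zero _ hq0
        ext i j
        fin_cases i <;> fin_cases j <;>
          simp [_root_.zpow_neg] <;> field_simp <;> ring } with hH
  have hsH : s ∈ H := ⟨1, 0, by simpa using hs⟩
  have huH : u ∈ H := ⟨0, 1, by simpa using hu⟩
  have hclH : Subgroup.closure {s, u} ≤ H := by
    rw [Subgroup.closure_le]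
    rintro x (rfl | rfl) <;> assumption
  -- u ∈ SL2Z
  have huSL : u ∈ SL2Z := by
    refine ⟨⟨!![1, 1; 0, 1], by simp [Matrix.det_fin_two_of]⟩, Units.ext ?_⟩
    show ((Matrix.SpecialLinearGroup.map (Int.castRingHom ℚ))
        (⟨!![1, 1; 0, 1], by simp [Matrix.det_fin_two_of]⟩ : Matrix.SpecialLinearGroup (Fin 2) ℤ) : Matrix (Fin 2) (Fin 2) ℚ)
      = (u : Matrix (Fin 2) (Fin 2) ℚ)
    erw [Matrix.SpecialLinearGroup.coe_matrix_coe, hu]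
    ext i j
    fin_cases i <;> fin_cases j <;> simp
  constructor
  · apply le_antisymm
    · rintro g ⟨hgcl, A, rfl⟩
      obtain ⟨n, t, hg⟩ := hclH hgcl
      -- entries of the image of A
      have hval : ∀ i j, ((Matrix.SpecialLinearGroup.toGL.comp
          (Matrix.SpecialLinearGroup.map (Int.castRingHom ℚ)) A : GL (Fin 2) ℚ) :
          Matrix (Fin 2) (Fin 2) ℚ) i j = ((A : Matrix (Fin 2) (Fin 2) ℤ) i j : ℚ) := by
        intro i j; rfl
      have h00 : ((A : Matrix (Fin 2) (Fin 2) ℤ) 0 0 : ℚ) = r ^ n := by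
        rw [← hval]; rw [hg]; simp
      have h11 : ((A : Matrix (Fin 2) (Fin 2) ℤ) 1 1 : ℚ) = r ^ n * (q:ℚ) ^ n := by
        rw [← hval]; rw [hg]; simp
      have h10 : (A : Matrix (Fin 2) (Fin 2) ℤ) 1 0 = 0 := by
        have : ((A : Matrix (Fin 2) (Fin 2) ℤ) 1 0 : ℚ) = 0 := by rw [← hval]; rw [hg]; simp
        exact_mod_cast this
      have hdet : (A : Matrix (Fin 2) (Fin 2) ℤ).det = 1 := A.prop
      rw [Matrix.det_fin_two, h10] at hdet
      simp at hdet
      have h00pos : 0 < (A : Matrix (Fin 2) (Fin 2) ℤ) 0 0 := by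
        have : (0:ℚ) < ((A : Matrix (Fin 2) (Fin 2) ℤ) 0 0 : ℚ) := by
          rw [h00]; positivity
        exact Int.cast_pos.mp this
      have h00one : (A : Matrix (Fin 2) (Fin 2) ℤ) 0 0 = 1 ∧
          (A : Matrix (Fin 2) (Fin 2) ℤ) 1 1 = 1 := by
        rcases Int.mul_eq_one_iff_eq_one_or_neg_one.mp hdet with ⟨h1, h2⟩ | ⟨h1, h2⟩
        · exact ⟨h1, h2⟩
        · omega
      have hrn : r ^ n = 1 := by rw [← h00, h00one.1]; norm_num
      have hqn : (q:ℚ) ^ n = 1 := by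
        have := h11
        rw [h00one.2, hrn] at this
        simpa using this.symm
      have hn0 : n = 0 := by
        have := zpow_right_injective₀ (by positivity : (0:ℚ) < (q:ℚ)) hq1.ne'
        simpa using this (by simpa using hqn : (q:ℚ) ^ n = (q:ℚ) ^ (0:ℤ))
      -- so g = u ^ (A 0 1)
      refine ⟨((A : Matrix (Fin 2) (Fin 2) ℤ) 0 1), ?_⟩
      apply Units.ext
      rw [upow_val u hu]
      rw [hg, hn0]
      have h01 : t = ((A : Matrix (Fin 2) (Fin 2) ℤ) 0 1 : ℚ) := by
        rw [← hval]; rw [hg]; simp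
      rw [h01]
      norm_num
    · rintro g ⟨m, rfl⟩
      exact ⟨Subgroup.zpow_mem _ (Subgroup.subset_closure (by simp)) m,
        Subgroup.zpow_mem _ huSL m⟩
  · intro hfin
    obtain ⟨m, hm, hmeq⟩ := isOfFinOrder_iff_pow_eq_one.mp hfin
    have : ((u ^ (m : ℤ) : GL (Fin 2) ℚ) : Matrix (Fin 2) (Fin 2) ℚ) 0 1 = (m : ℚ) := by
      rw [upow_val u hu]; simp
    rw [zpow_natCast, hmeq] at this
    simp [Matrix.one_fin_two] at this
    have hm0 : m = 0 := by exact_mod_cast this.symm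
    omega
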